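/- Let n, p be positive integers and let X and H be n×n complex Hermitian matrices. Then the sum over k = 0, 1, …, 2p−2 of Tr(X^k · H · X^(2p−2−k) · H) is at most (2p−1)·Tr(X^(2p−2)·H²), where all traces are real numbers. -/
import Mathlib

open Matrix Finset

private lemma sign_lemma (a b : ℝ) {k m : ℕ} (hk : k ≤ m) (hm : Even m) :
    0 ≤ (a ^ k - b ^ k) * (a ^ (m - k) - b ^ (m - k)) := by
  rcases Nat.even_or_odd k with hke | hko
  · have h2 : Even (m - k) := (Nat.even_sub hk).mpr (iff_of_true hm hke)
    rw [← hke.pow_abs a, ← hke.pow_abs b, ← h2.pow_abs a, ← h2.pow_abs b]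
    rcases le_total |a| |b| with h | h
    · nlinarith [sub_nonpos.mpr (pow_le_pow_left₀ (abs_nonneg a) h k),
        sub_nonpos.mpr (pow_le_pow_left₀ (abs_nonneg a) h (m - k))]
    · nlinarith [sub_nonneg.mpr (pow_le_pow_left₀ (abs_nonneg b) h k),
        sub_nonneg.mpr (pow_le_pow_left₀ (abs_nonneg b) h (m - k))]
  · have h2 : Odd (m - k) := Nat.Even.sub_odd hk hm hko
    rcases le_total a b with h | h
    · nlinarith [sub_nonpos.mpr ((hko.strictMono_pow (R := ℝ)).monotone h),
        sub_nonpos.mpr ((h2.strictMono_pow (R := ℝ)).monotone h)]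
    · nlinarith [sub_nonneg.mpr ((hko.strictMono_pow (R := ℝ)).monotone h),
        sub_nonneg.mpr ((h2.strictMono_pow (R := ℝ)).monotone h)]

private lemma pair_lemma (a b : ℝ) {k m : ℕ} (hk : k ≤ m) (hm : Even m) :
    a ^ k * b ^ (m - k) + a ^ (m - k) * b ^ k ≤ a ^ m + b ^ m := by
  have h := sign_lemma a b hk hm
  have ha : a ^ k * a ^ (m - k) = a ^ m := by rw [← pow_add, Nat.add_sub_cancel' hk]
  have hb : b ^ k * b ^ (m - k) = b ^ m := by rw [← pow_add, Nat.add_sub_cancel' hk]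
  nlinarith [h, ha, hb]

private lemma scalar_sum_lemma (a b : ℝ) {m : ℕ} (hm : Even m) :
    ∑ k ∈ range (m + 1), a ^ k * b ^ (m - k) ≤ ((m + 1 : ℝ) / 2) * (a ^ m + b ^ m) := by
  have hrefl : ∑ k ∈ range (m + 1), a ^ k * b ^ (m - k)
      = ∑ k ∈ range (m + 1), a ^ (m - k) * b ^ k := by
    rw [← Finset.sum_range_reflect]
    refine Finset.sum_congr rfl fun k hk => ?_
    have hk' : k ≤ m := Nat.lt_succ_iff.mp (Finset.mem_range.mp hk)
    rw [Nat.add_sub_cancel, Nat.sub_sub_self hk']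
  have h2 : 2 * ∑ k ∈ range (m + 1), a ^ k * b ^ (m - k)
      ≤ (m + 1 : ℝ) * (a ^ m + b ^ m) := by
    calc 2 * ∑ k ∈ range (m + 1), a ^ k * b ^ (m - k)
        = ∑ k ∈ range (m + 1), (a ^ k * b ^ (m - k) + a ^ (m - k) * b ^ k) := by
          rw [Finset.sum_add_distrib, ← hrefl]; ring
      _ ≤ ∑ _k ∈ range (m + 1), (a ^ m + b ^ m) := by
          refine Finset.sum_le_sum fun k hk => ?_
          exact pair_lemma a b (Nat.lt_succ_iff.mp (Finset.mem_range.mp hk)) hm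
      _ = (m + 1 : ℝ) * (a ^ m + b ^ m) := by
          rw [Finset.sum_const, Finset.card_range, nsmul_eq_mul]; push_cast; ring
  linarith

theorem sum_trace_pow_le (n p : ℕ) (hn : 0 < n) (hp : 0 < p)
    (X H : Matrix (Fin n) (Fin n) ℂ) (hX : Xᴴ = X) (hH : Hᴴ = H) :
    ∑ k ∈ Finset.range (2 * p - 1),
        (Matrix.trace (X ^ k * H * X ^ (2 * p - 2 - k) * H)).re ≤
      (2 * p - 1 : ℝ) * (Matrix.trace (X ^ (2 * p - 2) * H ^ 2)).re := by
  have hX' : X.IsHermitian := hX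
  set m : ℕ := 2 * p - 2 with hm_def
  have hm_even : Even m := by
    rcases p with _ | q
    · omega
    · exact ⟨q, by omega⟩
  have hrange : 2 * p - 1 = m + 1 := by omega
  set U : Matrix (Fin n) (Fin n) ℂ := (hX'.eigenvectorUnitary : Matrix (Fin n) (Fin n) ℂ)
    with hU_def
  have hUU : star U * U = 1 := Unitary.coe_star_mul_self hX'.eigenvectorUnitary
  have hUU' : U * star U = 1 := Unitary.coe_mul_star_self hX'.eigenvectorUnitary
  have hcancel : ∀ M : Matrix (Fin n) (Fin n) ℂ, star U * (U * M) = M := by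
    intro M; rw [← mul_assoc, hUU, one_mul]
  set lam : Fin n → ℝ := hX'.eigenvalues with hlam_def
  set D : Matrix (Fin n) (Fin n) ℂ := diagonal (fun i => (lam i : ℂ)) with hD_def
  have hspec : X = U * D * star U := hX'.spectral_theorem
  set B : Matrix (Fin n) (Fin n) ℂ := star U * H * U with hB_def
  have hBherm : Bᴴ = B := by
    rw [hB_def]
    simp only [star_eq_conjTranspose, conjTranspose_mul, conjTranspose_conjTranspose, hH,
      mul_assoc]
  have hBij : ∀ i j, B j i = starRingEnd ℂ (B i j) := by
    intro i j
    have := congrFun (congrFun hBherm j) i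
    simpa [Matrix.conjTranspose_apply] using this.symm
  have hXpow : ∀ k : ℕ, X ^ k = U * D ^ k * star U := by
    intro k
    induction k with
    | zero => simp [pow_zero, hUU']
    | succ k ih =>
      rw [pow_succ, ih]
      conv_lhs => rw [hspec]
      rw [pow_succ]
      simp only [mul_assoc, hcancel, hUU', mul_one]
  have hDpow : ∀ k : ℕ, D ^ k = diagonal (fun i => ((lam i : ℂ)) ^ k) := by
    intro k; rw [hD_def, Matrix.diagonal_pow]; rfl
  -- trace formula
  have htrace : ∀ k, k ≤ m →
      (Matrix.trace (X ^ k * H * X ^ (m - k) * H)).re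
        = ∑ i, ∑ j, lam i ^ k * lam j ^ (m - k) * Complex.normSq (B i j) := by
    intro k hk
    have h1 : X ^ k * H * X ^ (m - k) * H
        = U * (D ^ k * B * D ^ (m - k) * B) * star U := by
      rw [hXpow k, hXpow (m - k), hB_def]
      simp only [mul_assoc, hcancel, hUU', mul_one]
    rw [h1, Matrix.trace_mul_cycle U _ (star U), ← mul_assoc, hUU, one_mul,
      hDpow k, hDpow (m - k)]
    have hcx : Matrix.trace ((diagonal fun i => (lam i : ℂ) ^ k) * B
          * (diagonal fun i => (lam i : ℂ) ^ (m - k)) * B)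
        = ∑ i, ∑ j, ((lam i ^ k * lam j ^ (m - k) * Complex.normSq (B i j) : ℝ) : ℂ) := by
      calc Matrix.trace ((diagonal fun i => (lam i : ℂ) ^ k) * B
              * (diagonal fun i => (lam i : ℂ) ^ (m - k)) * B)
          = ∑ i, ∑ j, ((lam i : ℂ) ^ k * B i j * (lam j : ℂ) ^ (m - k)) * B j i := by
            simp only [Matrix.trace, Matrix.diag, Matrix.mul_apply, Matrix.diagonal_apply,
              ite_mul, zero_mul, mul_ite, mul_zero, Finset.sum_ite_eq, Finset.sum_ite_eq',
              Finset.mem_univ, if_true]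
        _ = _ := by
            refine Finset.sum_congr rfl fun i _ => Finset.sum_congr rfl fun j _ => ?_
            rw [hBij i j,
              show ((lam i : ℂ) ^ k * B i j * (lam j : ℂ) ^ (m - k)) * starRingEnd ℂ (B i j)
                  = ((lam i : ℂ) ^ k * (lam j : ℂ) ^ (m - k))
                    * (B i j * starRingEnd ℂ (B i j)) from by ring,
              Complex.mul_conj]
            push_cast
            ring
    rw [hcx]
    simp only [← Complex.ofReal_sum, Complex.ofReal_re]
  -- abbreviation for the coefficients
  set c : Fin n → Fin n → ℝ := fun i j => Complex.normSq (B i j) with hc_def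
  have hc_nonneg : ∀ i j, 0 ≤ c i j := fun i j => Complex.normSq_nonneg _
  have hc_symm : ∀ i j, c j i = c i j := by
    intro i j; rw [hc_def]; simp only; rw [hBij i j, Complex.normSq_conj]
  have hR : (Matrix.trace (X ^ m * H ^ 2)).re = ∑ i, ∑ j, lam i ^ m * c i j := by
    have h0 := htrace m le_rfl
    simp only [Nat.sub_self, pow_zero, mul_one] at h0
    rw [← h0]
    congr 2
    rw [pow_two, mul_assoc]
  have hsymm : ∑ i, ∑ j, lam j ^ m * c i j = ∑ i, ∑ j, lam i ^ m * c i j := by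
    rw [Finset.sum_comm]
    exact Finset.sum_congr rfl fun i _ => Finset.sum_congr rfl fun j _ => by
      rw [hc_symm]
  have hcoef : (2 * (p : ℝ) - 1) = (m : ℝ) + 1 := by
    have h2p : 2 * p = m + 2 := by omega
    have : (2 * p : ℝ) = (m : ℝ) + 2 := by exact_mod_cast congrArg (Nat.cast : ℕ → ℝ) h2p
    linarith
  rw [hrange, hcoef, hR]
  calc ∑ k ∈ Finset.range (m + 1), (Matrix.trace (X ^ k * H * X ^ (m - k) * H)).re
      = ∑ k ∈ Finset.range (m + 1), ∑ i, ∑ j, lam i ^ k * lam j ^ (m - k) * c i j := by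
        exact Finset.sum_congr rfl fun k hk =>
          htrace k (Nat.lt_succ_iff.mp (Finset.mem_range.mp hk))
    _ = ∑ i, ∑ j, ∑ k ∈ Finset.range (m + 1), lam i ^ k * lam j ^ (m - k) * c i j := by
        rw [Finset.sum_comm]
        exact Finset.sum_congr rfl fun i _ => Finset.sum_comm 


    _ ≤ ∑ i, ∑ j, ((m + 1 : ℝ) / 2) * (lam i ^ m + lam j ^ m) * c i j := by
        refine Finset.sum_le_sum fun i _ => Finset.sum_le_sum fun j _ => ?_
        have := mul_le_mul_of_nonneg_right (scalar_sum_lemma (lam i) (lam j) hm_even)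
          (hc_nonneg i j)
        rw [Finset.sum_mul] at this
        convert this using 2
    _ = ((m + 1 : ℝ) / 2) * ((∑ i, ∑ j, lam i ^ m * c i j) + ∑ i, ∑ j, lam j ^ m * c i j) := by
        simp only [Finset.mul_sum, Finset.sum_add_distrib, mul_add]
        rw [← Finset.sum_add_distrib]
        refine Finset.sum_congr rfl fun i _ => ?_
        rw [← Finset.sum_add_distrib]
        exact Finset.sum_congr rfl fun j _ => by ring
    _ = ((m : ℝ) + 1) * ∑ i, ∑ j, lam i ^ m * c i j := by
        rw [hsymm]; ring
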